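/- Fix n ≥ 2 and Y : ℤ → ℕ → ℂ with Wronskian-type brackets as in the context, and assume [y₁, …, y_s] ≠ 0 for every 1 ≤ s ≤ n. Then the dressed-vacuum-form identity holds: [y₀, y₂, …, y_n] / [y₁, …, y_n] = Y 0 0 / Y 1 0 + Σ_{a=1}^{n−1} ( [y₂, …, y_{a+1}]·[y₀, y₁, …, y_a] ) / ( [y₁, …, y_a]·[y₁, …, y_{a+1}] ), where [y₂, …, y_{a+1}] and [y₁, …, y_a] are a×a determinants and [y₀, y₁, …, y_a] and [y₁, …, y_{a+1}] are (a+1)×(a+1) determinants. -/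

import Mathlib

open Matrix

def colDet {N : ℕ} [NeZero N] (A : Matrix (Fin N) (Fin N) ℂ) : (Fin N → ℂ) →ₗ[ℂ] ℂ where
  toFun w := (A.updateCol 0 w).det
  map_add' u v := A.det_updateCol_add 0 u v
  map_smul' c u := by simpa using A.det_updateCol_smul 0 c u

lemma plucker (t : ℕ) (Y : ℤ → ℕ → ℂ)
    (hP : (Matrix.of fun (r j : Fin (t+2)) => Y (((j:ℕ):ℤ)+1) (r:ℕ)).det ≠ 0) :
    (Matrix.of fun (r j : Fin (t+2)) => Y (if (j:ℕ) = 0 then 0 else ((j:ℕ):ℤ)+1) (r:ℕ)).det *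
      (Matrix.of fun (r j : Fin (t+1)) => Y (((j:ℕ):ℤ)+1) (r:ℕ)).det
    = (Matrix.of fun (r j : Fin (t+1)) => Y (if (j:ℕ) = 0 then 0 else ((j:ℕ):ℤ)+1) (r:ℕ)).det *
        (Matrix.of fun (r j : Fin (t+2)) => Y (((j:ℕ):ℤ)+1) (r:ℕ)).det
      + (Matrix.of fun (r j : Fin (t+1)) => Y (((j:ℕ):ℤ)+2) (r:ℕ)).det *
        (Matrix.of fun (r j : Fin (t+2)) => Y ((j:ℕ):ℤ) (r:ℕ)).det := by
  set M : Matrix (Fin (t+2)) (Fin (t+2)) ℂ :=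
    Matrix.of fun (r j : Fin (t+2)) => Y (((j:ℕ):ℤ)+1) (r:ℕ) with hM
  set C : Matrix (Fin (t+2)) (Fin (t+2)) ℂ :=
    Matrix.of fun (r j : Fin (t+2)) => Y (if (j:ℕ) = 0 then ((t:ℤ)+2) else ((j:ℕ):ℤ)) (r:ℕ) with hC
  set D : Matrix (Fin (t+1)) (Fin (t+1)) ℂ :=
    Matrix.of fun (r j : Fin (t+1)) => Y (if (j:ℕ) = 0 then ((t:ℤ)+2) else ((j:ℕ):ℤ)+1) (r:ℕ) with hD
  set q1 : ℂ := (Matrix.of fun (r j : Fin (t+1)) => Y (((j:ℕ):ℤ)+1) (r:ℕ)).det with hq1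
  set q2 : ℂ := (Matrix.of fun (r j : Fin (t+1)) => Y (((j:ℕ):ℤ)+2) (r:ℕ)).det with hq2
  -- sign relations
  have hMC : M = C.submatrix id (finRotate (t+2)) := by
    ext r j
    simp only [hM, hC, Matrix.submatrix_apply, Matrix.of_apply, id_eq, finRotate_succ_apply,
      Fin.val_add_one]
    by_cases hj : j = Fin.last (t+1)
    · simp only [hj, if_pos rfl, Fin.val_last]
      norm_num [show ((t:ℤ)+1)+1 = (t:ℤ)+2 from by ring]
    · simp only [if_neg hj]
      push_cast
      rfl
  have hQ2D : (Matrix.of fun (r j : Fin (t+1)) => Y (((j:ℕ):ℤ)+2) (r:ℕ))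
      = D.submatrix id (finRotate (t+1)) := by
    ext r j
    simp only [hD, Matrix.submatrix_apply, Matrix.of_apply, id_eq, finRotate_succ_apply,
      Fin.val_add_one]
    by_cases hj : j = Fin.last t
    · simp only [hj, if_pos rfl, Fin.val_last, if_pos rfl]
      congr 1
    · simp only [if_neg hj]
      push_cast
      rfl
  have hdetM : M.det = ((-1:ℂ)^(t+1)) * C.det := by
    rw [hMC, Matrix.det_permute' (finRotate (t+2)) C, sign_finRotate]
    push_cast
    ring
  have hdetQ2 : q2 = ((-1:ℂ)^t) * D.det := by
    rw [hq2, hQ2D, Matrix.det_permute' (finRotate (t+1)) D, sign_finRotate]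
    push_cast
    ring
  -- the linear functional
  set F : (Fin (t+2) → ℂ) →ₗ[ℂ] ℂ :=
    q1 • colDet M
    - M.det • ((colDet D).comp (LinearMap.funLeft ℂ ℂ Fin.castSucc))
    - q2 • colDet C with hF
  have hFapp : ∀ w : Fin (t+2) → ℂ, F w =
      q1 * (M.updateCol 0 w).det
      - M.det * (D.updateCol 0 (w ∘ Fin.castSucc)).det
      - q2 * (C.updateCol 0 w).det := by
    intro w
    simp [hF, colDet, LinearMap.funLeft, smul_eq_mul]
  have hbasis : ∀ k : Fin (t+2), F (fun r => M r k) = 0 := by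
    intro k
    rw [hFapp]
    by_cases hk0 : k = 0
    · subst hk0
      have e1 : M.updateCol 0 (fun r => M r 0) = M := M.updateCol_eq_self 0
      have e2 : D.updateCol 0 ((fun r => M r 0) ∘ Fin.castSucc)
          = Matrix.of fun (r j : Fin (t+1)) => Y (((j:ℕ):ℤ)+1) (r:ℕ) := by
        ext r j
        by_cases hj : j = 0
        · subst hj
          simp [Matrix.updateCol_apply, hM]
        · have : (j:ℕ) ≠ 0 := fun h => hj (Fin.ext h)
          simp [Matrix.updateCol_apply, hj, hD, this]
      have e3 : (C.updateCol 0 fun r => M r 0).det = 0 := by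
        apply Matrix.det_zero_of_column_eq (show (0:Fin (t+2)) ≠ 1 by simp)
        intro r
        simp [Matrix.updateCol_apply, hM, hC, Fin.val_one]
      rw [e1, e2, e3, ← hq1]
      ring
    · by_cases hkl : k = Fin.last (t+1)
      · subst hkl
        have e1 : (M.updateCol 0 fun r => M r (Fin.last (t+1))).det = 0 := by
          apply Matrix.det_zero_of_column_eq (show (0:Fin (t+2)) ≠ Fin.last (t+1) by
            simp [Fin.ext_iff])
          intro r
          simp [Matrix.updateCol_apply, Fin.ext_iff]
        have e2 : D.updateCol 0 ((fun r => M r (Fin.last (t+1))) ∘ Fin.castSucc) = D := by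
          have : ((fun r => M r (Fin.last (t+1))) ∘ Fin.castSucc) = fun r => D r 0 := by
            funext r
            simp only [Function.comp_apply, hM, hD, Matrix.of_apply, Fin.val_last,
              Fin.coe_castSucc, Fin.val_zero, if_pos rfl]
            congr 1
          rw [this]
          exact D.updateCol_eq_self 0
        have e3 : C.updateCol 0 (fun r => M r (Fin.last (t+1))) = C := by
          have : (fun r => M r (Fin.last (t+1))) = fun r => C r 0 := by
            funext r
            simp only [hM, hC, Matrix.of_apply, Fin.val_last, Fin.val_zero, if_pos rfl]
            congr 1
          rw [this]
          exact C.updateCol_eq_self 0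
        rw [e1, e2, e3, hdetM, hdetQ2, pow_succ]
        ring
      · have hkv : (k:ℕ) ≠ 0 := fun h => hk0 (Fin.ext h)
        have hkt : (k:ℕ) < t+1 := by
          have h1 := k.isLt
          have h2 : (k:ℕ) ≠ t+1 := fun h => hkl (Fin.ext (by simp [h]))
          omega
        have e1 : (M.updateCol 0 fun r => M r k).det = 0 := by
          apply Matrix.det_zero_of_column_eq (show (0:Fin (t+2)) ≠ k from fun h => hk0 h.symm)
          intro r
          simp [Matrix.updateCol_apply, fun h : k = 0 => hk0 h]
        have e2 : (D.updateCol 0 ((fun r => M r k) ∘ Fin.castSucc)).det = 0 := by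
          apply Matrix.det_zero_of_column_eq
            (show (0:Fin (t+1)) ≠ ⟨(k:ℕ), hkt⟩ from by simp [Fin.ext_iff, hkv, Ne.symm])
          intro r
          have h6 : (⟨(k:ℕ), hkt⟩ : Fin (t+1)) ≠ 0 := fun h => hkv (congrArg Fin.val h)
          rw [Matrix.updateCol_self, Matrix.updateCol_ne h6]
          simp only [hM, hD, Function.comp_apply, Matrix.of_apply, Fin.coe_castSucc, if_neg hkv]
        have e3 : (C.updateCol 0 fun r => M r k).det = 0 := by
          apply Matrix.det_zero_of_column_eq
            (show (0:Fin (t+2)) ≠ ⟨(k:ℕ)+1, by omega⟩ from fun h => absurd (congrArg Fin.val h) (by simp))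
          intro r
          have h5 : (⟨(k:ℕ)+1, by omega⟩ : Fin (t+2)) ≠ 0 := fun h => absurd (congrArg Fin.val h) (by simp)
          rw [Matrix.updateCol_self, Matrix.updateCol_ne h5]
          simp only [hM, hC, Matrix.of_apply]
          rw [if_neg (by simp)]
          push_cast
          rfl
        rw [e1, e2, e3]
        ring
  -- express v0 in the column basis
  set v0 : Fin (t+2) → ℂ := fun r => Y 0 (r:ℕ) with hv0
  have hunit : IsUnit M.det := isUnit_iff_ne_zero.2 hP
  set c : Fin (t+2) → ℂ := M⁻¹ *ᵥ v0 with hc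
  have hv : v0 = ∑ k, c k • (fun r => M r k) := by
    have h1 : M *ᵥ c = v0 := by
      rw [hc, Matrix.mulVec_mulVec, Matrix.mul_nonsing_inv _ hunit, Matrix.one_mulVec]
    rw [← h1]
    funext r
    simp [Matrix.mulVec, dotProduct, Finset.sum_apply, mul_comm]
  have hF0 : F v0 = 0 := by
    rw [hv, map_sum]
    refine Finset.sum_eq_zero fun k _ => ?_
    rw [F.map_smul, hbasis k, smul_zero]
  rw [hFapp v0] at hF0
  have eA : M.updateCol 0 v0
      = Matrix.of fun (r j : Fin (t+2)) => Y (if (j:ℕ) = 0 then 0 else ((j:ℕ):ℤ)+1) (r:ℕ) := by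
    ext r j
    by_cases hj : j = 0
    · subst hj; simp [Matrix.updateCol_apply, hv0]
    · have : (j:ℕ) ≠ 0 := fun h => hj (Fin.ext h)
      simp [Matrix.updateCol_apply, hj, hM, this]
  have eB : D.updateCol 0 (v0 ∘ Fin.castSucc)
      = Matrix.of fun (r j : Fin (t+1)) => Y (if (j:ℕ) = 0 then 0 else ((j:ℕ):ℤ)+1) (r:ℕ) := by
    ext r j
    by_cases hj : j = 0
    · subst hj; simp [Matrix.updateCol_apply, hv0]
    · have : (j:ℕ) ≠ 0 := fun h => hj (Fin.ext h)
      simp [Matrix.updateCol_apply, hj, hD, this]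
  have eC : C.updateCol 0 v0
      = Matrix.of fun (r j : Fin (t+2)) => Y ((j:ℕ):ℤ) (r:ℕ) := by
    ext r j
    by_cases hj : j = 0
    · subst hj; simp [Matrix.updateCol_apply, hv0]
    · have : (j:ℕ) ≠ 0 := fun h => hj (Fin.ext h)
      simp [Matrix.updateCol_apply, hj, hC, this]
  rw [eA, eB, eC] at hF0
  linear_combination hF0

/-- Dressed vacuum form: for `n ≥ 2`, `Y : ℤ → ℕ → ℂ` with Wronskian-type brackets
`[y_{i₁}, …, y_{i_s}] = det ((r, j) ↦ Y i_j r)`, assuming `[y₁,…,y_s] ≠ 0` for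
`1 ≤ s ≤ n`, one has
`[y₀,y₂,…,y_n]/[y₁,…,y_n] = Y 0 0 / Y 1 0
   + Σ_{a=1}^{n−1} ([y₂,…,y_{a+1}]·[y₀,y₁,…,y_a])/([y₁,…,y_a]·[y₁,…,y_{a+1}])`. -/
theorem dressed_vacuum_form (n : ℕ) (hn : 2 ≤ n) (Y : ℤ → ℕ → ℂ)
    (B : (s : ℕ) → (Fin s → ℤ) → ℂ)
    (hB : ∀ (s : ℕ) (idx : Fin s → ℤ),
      B s idx = Matrix.det (Matrix.of fun (r j : Fin s) => Y (idx j) (r : ℕ)))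
    (hne : ∀ s : ℕ, 1 ≤ s → s ≤ n → B s (fun j => ((j : ℕ) : ℤ) + 1) ≠ 0) :
    B n (fun j => if (j : ℕ) = 0 then 0 else ((j : ℕ) : ℤ) + 1) /
      B n (fun j => ((j : ℕ) : ℤ) + 1) =
    Y 0 0 / Y 1 0 +
      ∑ a ∈ Finset.Icc 1 (n - 1),
        (B a (fun j => ((j : ℕ) : ℤ) + 2) * B (a + 1) (fun j => ((j : ℕ) : ℤ))) /
        (B a (fun j => ((j : ℕ) : ℤ) + 1) * B (a + 1) (fun j => ((j : ℕ) : ℤ) + 1)) := by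
  obtain ⟨m, rfl⟩ : ∃ m, n = m + 2 := ⟨n - 2, by omega⟩
  have hd : ∀ s : ℕ, 1 ≤ s → s ≤ m + 2 →
      (Matrix.of fun (r j : Fin s) => Y (((j:ℕ):ℤ)+1) (r:ℕ)).det ≠ 0 := by
    intro s h1 h2
    have := hne s h1 h2
    rwa [hB] at this
  set g : ℕ → ℂ := fun b =>
    (Matrix.of fun (r j : Fin (b+1)) => Y (if (j:ℕ) = 0 then 0 else ((j:ℕ):ℤ)+1) (r:ℕ)).det /
    (Matrix.of fun (r j : Fin (b+1)) => Y (((j:ℕ):ℤ)+1) (r:ℕ)).det with hg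
  have hstep : ∀ i : ℕ, i ≤ m →
      (B (i+1) (fun j => ((j : ℕ) : ℤ) + 2) * B (i+1+1) (fun j => ((j : ℕ) : ℤ))) /
        (B (i+1) (fun j => ((j : ℕ) : ℤ) + 1) * B (i+1+1) (fun j => ((j : ℕ) : ℤ) + 1))
      = g (i+1) - g i := by
    intro i hi
    have hQ1 : (Matrix.of fun (r j : Fin (i+1)) => Y (((j:ℕ):ℤ)+1) (r:ℕ)).det ≠ 0 :=
      hd (i+1) (by omega) (by omega)
    have hP1 : (Matrix.of fun (r j : Fin (i+2)) => Y (((j:ℕ):ℤ)+1) (r:ℕ)).det ≠ 0 :=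
      hd (i+2) (by omega) (by omega)
    have hpl := plucker i Y hP1
    rw [hB, hB, hB, hB, hg]
    show _ = _ / (Matrix.of fun (r j : Fin (i+2)) => Y (((j:ℕ):ℤ)+1) (r:ℕ)).det - _
    rw [div_sub_div _ _ hP1 hQ1,
      div_eq_div_iff (mul_ne_zero hQ1 hP1) (mul_ne_zero hP1 hQ1)]
    linear_combination
      (-((Matrix.of fun (r j : Fin (i+1)) => Y (((j:ℕ):ℤ)+1) (r:ℕ)).det *
      (Matrix.of fun (r j : Fin (i+2)) => Y (((j:ℕ):ℤ)+1) (r:ℕ)).det)) * hpl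
  have hsum : ∑ a ∈ Finset.Icc 1 (m + 2 - 1),
        (B a (fun j => ((j : ℕ) : ℤ) + 2) * B (a + 1) (fun j => ((j : ℕ) : ℤ))) /
        (B a (fun j => ((j : ℕ) : ℤ) + 1) * B (a + 1) (fun j => ((j : ℕ) : ℤ) + 1))
      = g (m+1) - g 0 := by
    have h1 : m + 2 - 1 = m + 1 := rfl
    rw [h1, ← Finset.Ico_add_one_right_eq_Icc, Finset.sum_Ico_eq_sum_range]
    have h2 : m + 1 + 1 - 1 = m + 1 := rfl
    rw [h2]
    rw [← Finset.sum_range_sub g (m+1)]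
    refine Finset.sum_congr rfl fun i hi => ?_
    rw [Finset.mem_range] at hi
    rw [add_comm 1 i]
    exact hstep i (by omega)
  rw [hB, hB, hsum]
  have hg0 : g 0 = Y 0 0 / Y 1 0 := by
    rw [hg]
    simp [Matrix.det_fin_one]
  have hgm : (Matrix.of fun (r j : Fin (m+2)) =>
        Y (if (j:ℕ) = 0 then 0 else ((j:ℕ):ℤ)+1) (r:ℕ)).det /
      (Matrix.of fun (r j : Fin (m+2)) => Y (((j:ℕ):ℤ)+1) (r:ℕ)).det = g (m+1) := rfl
  rw [hgm, hg0]
  ring
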